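/- Let A be one of ℝ, ℂ, or the quaternions ℍ, and consider V = A^{n+1} with the sesquilinear form ⟨v, v'⟩ = conj(v'_{n+1}) v₁ + Σ_{i=2}^n conj(v'_i) v_i + conj(v'_1) v_{n+1}. If v, v' ∈ V satisfy ⟨v,v⟩ < 0 and ⟨v',v'⟩ < 0, then tr_{A/ℝ}(conj(v_{n+1}) v'_{n+1} ⟨v, v'⟩) < 0. -/

import Mathlib

/-- The sesquilinear form `⟨v, w⟩ = conj(w_{n+1}) v₁ + ∑_{i=2}^n conj(w_i) v_i
+ conj(w_1) v_{n+1}` of signature `(n,1)`. -/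
def herm {A : Type*} [Ring A] [StarRing A] {n : ℕ} (v w : Fin (n + 1) → A) : A :=
  star (w (Fin.last n)) * v 0 +
    (∑ i ∈ Finset.Ioo (0 : Fin (n + 1)) (Fin.last n), star (w i) * v i) +
    star (w 0) * v (Fin.last n)

open Finset

theorem herm_key {A : Type*} [NormedRing A] [StarRing A] [Algebra ℝ A] [StarModule ℝ A]
    (t : A → ℝ)
    (htadd : ∀ x y : A, t (x + y) = t x + t y)
    (htsmul : ∀ (r : ℝ) (x : A), t (r • x) = r * t x)
    (htmul : ∀ x y : A, t (x * y) = t (y * x))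
    (htstar : ∀ x : A, t (star x) = t x)
    (ht1 : t 1 = 2)
    (hsq' : ∀ x : A, x * star x = algebraMap ℝ A (‖x‖ ^ 2))
    (hns : ∀ x : A, ‖star x‖ = ‖x‖)
    (n : ℕ) (v v' : Fin (n + 1) → A)
    (hv : t (herm v v) < 0) (hv' : t (herm v' v') < 0) :
    t (star (v (Fin.last n)) * v' (Fin.last n) * herm v v') < 0 := by
  have hsq : ∀ x : A, star x * x = algebraMap ℝ A (‖x‖ ^ 2) := by
    intro x
    have := hsq' (star x)
    rwa [star_star, hns] at this
  have ht0 : t 0 = 0 := by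
    have := htadd 0 0
    simp only [add_zero] at this
    linarith
  have htneg : ∀ x : A, t (-x) = -t x := by
    intro x
    have := htadd x (-x)
    simp only [add_neg_cancel, ht0] at this
    linarith
  have htsub : ∀ x y : A, t (x - y) = t x - t y := by
    intro x y
    rw [sub_eq_add_neg, htadd, htneg, sub_eq_add_neg]
  have htsum : ∀ (s : Finset (Fin (n + 1))) (f : Fin (n + 1) → A),
      t (∑ i ∈ s, f i) = ∑ i ∈ s, t (f i) := by
    intro s f
    induction s using Finset.cons_induction with
    | empty => simpa using ht0
    | cons a s ha ih => rw [Finset.sum_cons, htadd, ih, Finset.sum_cons]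
  have talg : ∀ r : ℝ, t (algebraMap ℝ A r) = 2 * r := by
    intro r
    rw [Algebra.algebraMap_eq_smul_one, htsmul, ht1]
    ring
  have tsq : ∀ x : A, t (star x * x) = 2 * ‖x‖ ^ 2 := by
    intro x
    rw [hsq, talg]
  have tswap : ∀ x y : A, t (star x * y) = t (star y * x) := by
    intro x y
    rw [← htstar (star x * y), star_mul, star_star]
  have CS : ∀ x y : A, t (star x * y) ≤ 2 * (‖x‖ * ‖y‖) := by
    intro x y
    rcases eq_or_ne x 0 with hx | hx
    · simp only [hx, star_zero, zero_mul, ht0, norm_zero]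
      positivity
    rcases eq_or_ne y 0 with hy | hy
    · simp only [hy, mul_zero, ht0, norm_zero]
      positivity
    have expand : star (‖y‖ • x - ‖x‖ • y) * (‖y‖ • x - ‖x‖ • y)
        = (‖y‖ * ‖y‖) • (star x * x) + (‖x‖ * ‖x‖) • (star y * y)
          - (‖x‖ * ‖y‖) • (star x * y) - (‖x‖ * ‖y‖) • (star y * x) := by
      simp only [star_sub, star_smul, star_trivial, sub_mul, mul_sub, smul_mul_assoc,
        mul_smul_comm, smul_smul]
      module
    have h0 : 0 ≤ t (star (‖y‖ • x - ‖x‖ • y) * (‖y‖ • x - ‖x‖ • y)) := by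
      rw [tsq]
      positivity
    rw [expand, htsub, htsub, htadd, htsmul, htsmul, htsmul, htsmul, tsq, tsq,
      tswap y x] at h0
    have hxpos : 0 < ‖x‖ := norm_pos_iff.mpr hx
    have hypos : 0 < ‖y‖ := norm_pos_iff.mpr hy
    nlinarith [mul_pos hxpos hypos]
  set L := Fin.last n with hL
  have hherm : ∀ w : Fin (n + 1) → A,
      t (herm w w) = 2 * t (star (w 0) * w L) + 2 * ∑ i ∈ Ioo (0 : Fin (n + 1)) L, ‖w i‖ ^ 2 := by
    intro w
    rw [herm, htadd, htadd, htsum, tswap (w L) (w 0)]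
    have : ∀ i ∈ Ioo (0 : Fin (n + 1)) L, t (star (w i) * w i) = 2 * ‖w i‖ ^ 2 :=
      fun i _ => tsq (w i)
    rw [Finset.sum_congr rfl this, ← Finset.mul_sum]
    ring
  set b := v L with hb_def
  set b' := v' L with hb'_def
  have hSv : (0 : ℝ) ≤ ∑ i ∈ Ioo (0 : Fin (n + 1)) L, ‖v i‖ ^ 2 :=
    Finset.sum_nonneg fun i _ => by positivity
  have hSv' : (0 : ℝ) ≤ ∑ i ∈ Ioo (0 : Fin (n + 1)) L, ‖v' i‖ ^ 2 :=
    Finset.sum_nonneg fun i _ => by positivity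
  have hbpos : 0 < ‖b‖ := by
    rw [norm_pos_iff]
    intro h
    rw [hb_def] at h
    rw [hherm v, h, mul_zero, ht0, mul_zero, zero_add] at hv
    linarith
  have hb'pos : 0 < ‖b'‖ := by
    rw [norm_pos_iff]
    intro h
    rw [hb'_def] at h
    rw [hherm v', h, mul_zero, ht0, mul_zero, zero_add] at hv'
    linarith
  have hexp : star b * b' * herm v v'
      = (‖b'‖ ^ 2) • (star b * v 0)
        + (∑ i ∈ Ioo (0 : Fin (n + 1)) L, star b * b' * (star (v' i) * v i))
        + star b * b' * (star (v' 0) * b) := by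
    rw [herm, mul_add, mul_add, Finset.mul_sum]
    congr 2
    rw [mul_assoc, ← mul_assoc b', hsq', ← Algebra.smul_def, mul_smul_comm]
  have hthird : t (star b * b' * (star (v' 0) * b)) = ‖b‖ ^ 2 * t (star (v' 0) * b') := by
    rw [htmul]
    have : star (v' 0) * b * (star b * b') = ‖b‖ ^ 2 • (star (v' 0) * b') := by
      rw [mul_assoc, ← mul_assoc b, hsq', ← Algebra.smul_def, mul_smul_comm]
    rw [this, htsmul]
  have hmid : ∀ i ∈ Ioo (0 : Fin (n + 1)) L,
      t (star b * b' * (star (v' i) * v i))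
        ≤ ‖v i‖ ^ 2 * ‖b'‖ ^ 2 + ‖v' i‖ ^ 2 * ‖b‖ ^ 2 := by
    intro i _
    have h1 : t (star b * b' * (star (v' i) * v i))
        ≤ 2 * (‖v' i * star b'‖ * ‖v i * star b‖) := by
      have e1 : star b * b' * (star (v' i) * v i) = star b * (b' * star (v' i)) * v i := by
        noncomm_ring
      rw [e1, htmul]
      have e2 : v i * (star b * (b' * star (v' i))) = v i * star b * (b' * star (v' i)) := by
        noncomm_ring
      rw [e2, htmul]
      have e3 : b' * star (v' i) = star (v' i * star b') := by rw [star_mul, star_star]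
      rw [e3]
      exact CS _ _
    have h2 : ‖v i * star b‖ ≤ ‖v i‖ * ‖b‖ := by
      calc ‖v i * star b‖ ≤ ‖v i‖ * ‖star b‖ := norm_mul_le _ _
      _ = ‖v i‖ * ‖b‖ := by rw [hns]
    have h3 : ‖v' i * star b'‖ ≤ ‖v' i‖ * ‖b'‖ := by
      calc ‖v' i * star b'‖ ≤ ‖v' i‖ * ‖star b'‖ := norm_mul_le _ _
      _ = ‖v' i‖ * ‖b'‖ := by rw [hns]
    have h4 : (0 : ℝ) ≤ ‖v i * star b‖ := norm_nonneg _
    have h5 : (0 : ℝ) ≤ ‖v' i * star b'‖ := norm_nonneg _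
    nlinarith [sq_nonneg (‖v i‖ * ‖b'‖ - ‖v' i‖ * ‖b‖), norm_nonneg (v i),
      norm_nonneg (v' i), hbpos.le, hb'pos.le]
  have tT : t (star b * b' * herm v v')
      = ‖b'‖ ^ 2 * t (star (v 0) * b)
        + (∑ i ∈ Ioo (0 : Fin (n + 1)) L, t (star b * b' * (star (v' i) * v i)))
        + ‖b‖ ^ 2 * t (star (v' 0) * b') := by
    rw [hexp, htadd, htadd, htsum, htsmul, hthird, tswap b (v 0)]
  have hsum := Finset.sum_le_sum hmid
  rw [Finset.sum_add_distrib, ← Finset.sum_mul, ← Finset.sum_mul] at hsum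
  rw [hherm v] at hv
  rw [hherm v'] at hv'
  rw [tT]
  have k1 : (2 * t (star (v 0) * b) + 2 * ∑ i ∈ Ioo (0 : Fin (n + 1)) L, ‖v i‖ ^ 2) * ‖b'‖ ^ 2
      < 0 := mul_neg_of_neg_of_pos hv (pow_pos hb'pos 2)
  have k2 : (2 * t (star (v' 0) * b') + 2 * ∑ i ∈ Ioo (0 : Fin (n + 1)) L, ‖v' i‖ ^ 2) * ‖b‖ ^ 2
      < 0 := mul_neg_of_neg_of_pos hv' (pow_pos hbpos 2)
  nlinarith [hsum, k1, k2]

/-- For `A` one of `ℝ`, `ℂ`, `ℍ`: if `⟨v,v⟩ < 0` and `⟨v',v'⟩ < 0` then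
`tr_{A/ℝ}(conj(v_{n+1}) v'_{n+1} ⟨v, v'⟩) < 0`. -/
theorem stmt_3 :
    (∀ (n : ℕ) (v v' : Fin (n + 1) → ℝ),
        herm v v < 0 → herm v' v' < 0 →
        star (v (Fin.last n)) * v' (Fin.last n) * herm v v' +
          star (star (v (Fin.last n)) * v' (Fin.last n) * herm v v') < 0) ∧
    (∀ (n : ℕ) (v v' : Fin (n + 1) → ℂ),
        (herm v v).re < 0 → (herm v' v').re < 0 →
        (star (v (Fin.last n)) * v' (Fin.last n) * herm v v' +
          star (star (v (Fin.last n)) * v' (Fin.last n) * herm v v')).re < 0) ∧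
    (∀ (n : ℕ) (v v' : Fin (n + 1) → Quaternion ℝ),
        (herm v v).re < 0 → (herm v' v').re < 0 →
        (star (v (Fin.last n)) * v' (Fin.last n) * herm v v' +
          star (star (v (Fin.last n)) * v' (Fin.last n) * herm v v')).re < 0) := by
  refine ⟨?_, ?_, ?_⟩
  · intro n v v' hv hv'
    exact herm_key (A := ℝ) (fun x => x + star x)
      (fun x y => by simp; ring)
      (fun r x => by simp; ring)
      (fun x y => by rw [mul_comm])
      (fun x => by simp [add_comm])
      (by norm_num)
      (fun x => by simp [Real.norm_eq_abs, sq_abs]; ring)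
      (fun x => by simp)
      n v v' (by simpa using by linarith) (by simpa using by linarith)
  · intro n v v' hv hv'
    exact herm_key (A := ℂ) (fun x => (x + star x).re)
      (fun x y => by simp [Complex.add_re]; ring)
      (fun r x => by simp [Complex.add_re, Complex.smul_re]; ring)
      (fun x y => by rw [mul_comm])
      (fun x => by
        show (star x + star (star x)).re = (x + star x).re
        rw [star_star, add_comm])
      (by norm_num)
      (fun x => by
        simp [Complex.star_def, Complex.mul_conj, Complex.normSq_eq_norm_sq])
      (fun x => norm_star x)
      n v v'
      (by simp only [Complex.add_re, Complex.star_def, Complex.conj_re]; linarith)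
      (by simp only [Complex.add_re, Complex.star_def, Complex.conj_re]; linarith)
  · intro n v v' hv hv'
    haveI : StarModule ℝ (Quaternion ℝ) :=
      ⟨fun r a => by rw [Quaternion.star_smul]; rfl⟩
    exact herm_key (A := Quaternion ℝ) (fun x => (x + star x).re)
      (fun x y => by simp [Quaternion.re_add]; ring)
      (fun r x => by simp [Quaternion.re_add, Quaternion.re_smul, smul_eq_mul]; ring)
      (fun x y => by simp [Quaternion.re_add, Quaternion.re_mul]; ring)
      (fun x => by
        show (star x + star (star x)).re = (x + star x).re
        rw [star_star, add_comm])
      (by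
        show ((1 : Quaternion ℝ) + star 1).re = 2
        rw [star_one, Quaternion.re_add, Quaternion.re_one]
        norm_num)
      (fun x => by
        rw [Quaternion.self_mul_star, sq, ← Quaternion.normSq_eq_norm_mul_self]
        rfl)
      (fun x => Quaternion.norm_star x)
      n v v'
      (by simp only [Quaternion.re_add, Quaternion.re_star]; linarith)
      (by simp only [Quaternion.re_add, Quaternion.re_star]; linarith)
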